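/- Let x = ∑_{i=1}^n ω^{α_i}·a_i and y = ∑_{j=1}^m ω^{β_j}·b_j be nonzero ordinals in Cantor normal form. Then the left division x / y is given by: (1) if α_1 < β_1 then x / y = 0. Otherwise let k be the greatest index i with α_i ≥ β_1, and let q = ⌊a_k / b_1⌋ be the natural-number quotient; then: (2) if α_k ≠ β_1 then x / y = ∑_{i=1}^k ω^{α_i ∸ β_1}·a_i; (3) if α_k = β_1 and ∑_{i=k}^n ω^{α_i}·a_i ≥ ω^{α_k}·(b_1·q) + ∑_{j=2}^m ω^{β_j}·b_j, then x / y = ∑_{i=1}^{k-1} ω^{α_i ∸ β_1}·a_i + q; (4) otherwise (α_k = β_1 and the inequality in (3) fails), x / y = ∑_{i=1}^{k-1} ω^{α_i ∸ β_1}·a_i + (q − 1). -/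

import Mathlib

open Ordinal

/-- The value of a Cantor normal form expression `∑_{i<n} ω^(α i) · (a i)`,
with the summands added in order of increasing index. -/
noncomputable def CNFsum (n : ℕ) (α : ℕ → Ordinal) (a : ℕ → ℕ) : Ordinal :=
  ((List.range n).map fun i => ω ^ α i * (a i : Ordinal)).sum

lemma CNFsum_succ (n : ℕ) (α : ℕ → Ordinal) (a : ℕ → ℕ) :
    CNFsum (n + 1) α a = CNFsum n α a + ω ^ α n * (a n : Ordinal) := by
  simp [CNFsum, List.range_succ]

lemma CNFsum_front (n : ℕ) (α : ℕ → Ordinal) (a : ℕ → ℕ) :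
    CNFsum (n + 1) α a
      = ω ^ α 0 * (a 0 : Ordinal) + CNFsum n (fun i => α (i + 1)) (fun i => a (i + 1)) := by
  simp [CNFsum, List.range_succ_eq_map, List.map_map, Function.comp_def]

lemma CNFsum_split (s n : ℕ) (h : s ≤ n) (α : ℕ → Ordinal) (a : ℕ → ℕ) :
    CNFsum n α a = CNFsum s α a + CNFsum (n - s) (fun i => α (s + i)) (fun i => a (s + i)) := by
  conv_lhs => rw [show n = s + (n - s) by omega]
  simp [CNFsum, List.range_add, List.map_map, Function.comp_def]

lemma CNFsum_lt (n : ℕ) (α : ℕ → Ordinal) (a : ℕ → ℕ) (γ : Ordinal)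
    (h : ∀ i, i < n → α i < γ) : CNFsum n α a < ω ^ γ := by
  induction n with
  | zero => simp [CNFsum]; exact opow_pos γ omega0_pos
  | succ n ih =>
    rw [CNFsum_succ]
    refine principal_add_omega0_opow γ (ih fun i hi => h i (by omega)) ?_
    calc ω ^ α n * (a n : Ordinal) < ω ^ α n * ω :=
          mul_lt_mul_of_pos_left (nat_lt_omega0 _) (opow_pos _ omega0_pos)
      _ = ω ^ (α n + 1) := by rw [opow_add, opow_one]
      _ ≤ ω ^ γ := opow_le_opow_right omega0_pos
            (by simpa using Order.add_one_le_of_lt (h n (by omega)))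

lemma CNFsum_le (n : ℕ) (α : ℕ → Ordinal) (a : ℕ → ℕ) (hn : 1 ≤ n) :
    ω ^ α 0 * (a 0 : Ordinal) ≤ CNFsum n α a := by
  obtain ⟨n, rfl⟩ : ∃ k, n = k + 1 := ⟨n - 1, by omega⟩
  rw [CNFsum_front]; exact le_self_add

lemma nat_mul_opow (c : ℕ) (δ : Ordinal) (hδ : 0 < δ) :
    ((c : Ordinal) + 1) * ω ^ δ = ω ^ δ := by
  have h1 : (1 : Ordinal) ≤ δ := Order.one_le_iff_pos.2 hδ
  have : δ = 1 + (δ - 1) := (Ordinal.add_sub_cancel_of_le h1).symm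
  rw [this, opow_add, opow_one, ← mul_assoc,
    mul_omega0 (by exact_mod_cast Nat.cast_pos.mpr (Nat.succ_pos c))
    (by exact_mod_cast nat_lt_omega0 (c + 1))]

lemma mul_opow_eq {y e : Ordinal} (c : ℕ) (h1 : ω ^ e ≤ y) (h2 : y ≤ ω ^ e * ((c : Ordinal) + 1))
    (δ : Ordinal) (hδ : 0 < δ) : y * ω ^ δ = ω ^ (e + δ) := by
  apply le_antisymm
  · calc y * ω ^ δ ≤ ω ^ e * ((c : Ordinal) + 1) * ω ^ δ := mul_le_mul_left h2 _
      _ = ω ^ e * ω ^ δ := by rw [mul_assoc, nat_mul_opow c δ hδ]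
      _ = ω ^ (e + δ) := (opow_add _ _ _).symm
  · rw [opow_add]; exact mul_le_mul_left h1 _

lemma div_eq_of (a y q : Ordinal) (hy : y ≠ 0) (h1 : y * q ≤ a) (h2 : a < y * (q + 1)) :
    a / y = q := by
  apply le_antisymm
  · rw [Ordinal.div_le hy, ← add_one_eq_succ]; exact h2
  · rw [Ordinal.le_div hy]; exact h1

lemma mul_CNFsum {y e : Ordinal} (c : ℕ) (h1 : ω ^ e ≤ y) (h2 : y ≤ ω ^ e * ((c : Ordinal) + 1))
    (k : ℕ) (α : ℕ → Ordinal) (a : ℕ → ℕ) (hpos : ∀ i, i < k → e < α i) :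
    y * CNFsum k (fun i => α i - e) a = CNFsum k α a := by
  induction k with
  | zero => simp [CNFsum]
  | succ k ih =>
    rw [CNFsum_succ, CNFsum_succ, mul_add, ih (fun i hi => hpos i (by omega)), ← mul_assoc,
      mul_opow_eq c h1 h2 (α k - e) ?_, Ordinal.add_sub_cancel_of_le (hpos k (by omega)).le]
    exact Ordinal.lt_sub.mpr (by simpa using hpos k (by omega))

lemma mul_nat_eq (e r : Ordinal) (B : ℕ) (hr : r < ω ^ e) (hB : 0 < B) (q : ℕ) (hq : 1 ≤ q) :
    (ω ^ e * (B : Ordinal) + r) * (q : Ordinal) = ω ^ e * ((B * q : ℕ) : Ordinal) + r := by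
  induction q with
  | zero => omega
  | succ q ih =>
    rcases Nat.eq_zero_or_pos q with rfl | hq'
    · simp
    · have habs : r + (ω ^ e * (B : Ordinal) + r) = ω ^ e * (B : Ordinal) + r :=
        add_absorp hr
          (le_trans (by calc ω ^ e = ω ^ e * 1 := (mul_one _).symm
              _ ≤ ω ^ e * (B : Ordinal) := mul_le_mul_right (by exact_mod_cast hB) _)
          (le_self_add))
      rw [Nat.cast_succ, mul_add, mul_one, ih hq', add_assoc, habs, ← add_assoc, ← mul_add,
        ← Nat.cast_add, show B * q + B = B * (q + 1) by ring]

/-- Left division of two nonzero ordinals given in Cantor normal form. If `α 0 < β 0` the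
quotient is `0`; otherwise, with `k` the greatest index whose exponent is `≥ β 0` and
`q = ⌊a k / b 0⌋`, the quotient is computed by the three remaining cases. -/
theorem cnf_div (n m : ℕ) (hn : 1 ≤ n) (hm : 1 ≤ m)
    (α β : ℕ → Ordinal) (a b : ℕ → ℕ)
    (hα : ∀ i j, i < j → j < n → α j < α i)
    (hβ : ∀ i j, i < j → j < m → β j < β i)
    (ha : ∀ i, i < n → 0 < a i) (hb : ∀ j, j < m → 0 < b j) :
    -- (1)
    (α 0 < β 0 → CNFsum n α a / CNFsum m β b = 0) ∧
    -- otherwise, `k` is the greatest index `i` with `α i ≥ β 0`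
    (∀ k, k < n → β 0 ≤ α k → (∀ i, k < i → i < n → α i < β 0) →
      -- (2)
      ((α k ≠ β 0 →
        CNFsum n α a / CNFsum m β b = CNFsum (k + 1) (fun i => α i - β 0) a) ∧
      -- (3)
      (α k = β 0 →
        ω ^ α k * ((b 0 * (a k / b 0) : ℕ) : Ordinal) +
            CNFsum (m - 1) (fun j => β (j + 1)) (fun j => b (j + 1)) ≤
          CNFsum (n - k) (fun i => α (k + i)) (fun i => a (k + i)) →
        CNFsum n α a / CNFsum m β b =
          CNFsum k (fun i => α i - β 0) a + ((a k / b 0 : ℕ) : Ordinal)) ∧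
      -- (4)
      (α k = β 0 →
        ¬(ω ^ α k * ((b 0 * (a k / b 0) : ℕ) : Ordinal) +
            CNFsum (m - 1) (fun j => β (j + 1)) (fun j => b (j + 1)) ≤
          CNFsum (n - k) (fun i => α (k + i)) (fun i => a (k + i))) →
        CNFsum n α a / CNFsum m β b =
          CNFsum k (fun i => α i - β 0) a + ((a k / b 0 - 1 : ℕ) : Ordinal)))) := by
  set x := CNFsum n α a with hxdef
  set y := CNFsum m β b with hydef
  set e := β 0 with hedef
  set B := b 0 with hBdef
  set rst := CNFsum (m - 1) (fun j => β (j + 1)) (fun j => b (j + 1)) with hrstdef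
  have hB0 : 0 < B := hb 0 (by omega)
  have hy_eq : y = ω ^ e * (B : Ordinal) + rst := by
    obtain ⟨m', rfl⟩ : ∃ m', m = m' + 1 := ⟨m - 1, by omega⟩
    rw [hydef, CNFsum_front]
    simp [hrstdef]
    rfl
  have hrst : rst < ω ^ e := by
    apply CNFsum_lt
    intro j hj
    exact hβ 0 (j + 1) (by omega) (by omega)
  have hy_ge : ω ^ e ≤ y := by
    rw [hy_eq]
    calc ω ^ e = ω ^ e * 1 := (mul_one _).symm
      _ ≤ ω ^ e * (B : Ordinal) := mul_le_mul_right (by exact_mod_cast hB0) _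
      _ ≤ _ := le_self_add
  have hy_le : y ≤ ω ^ e * ((B : Ordinal) + 1) := by
    rw [hy_eq, mul_add, mul_one]
    exact add_le_add_right hrst.le _
  have hy0 : y ≠ 0 := by
    intro h
    exact absurd (h ▸ hy_ge) (by simpa using (opow_pos e omega0_pos).not_ge)
  constructor
  · -- case (1)
    intro h1
    apply Ordinal.div_eq_zero_of_lt
    calc x < ω ^ e := CNFsum_lt n α a e
            (fun i hi => by rcases Nat.eq_zero_or_pos i with rfl | hi0
                            · exact h1
                            · exact (hα 0 i hi0 hi).trans h1)
      _ ≤ y := hy_ge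
  · intro k hk hkβ hk2
    -- facts about the tail at k
    set tailk := CNFsum (n - k) (fun i => α (k + i)) (fun i => a (k + i)) with htkdef
    have hx_split : x = CNFsum k α a + tailk := CNFsum_split k n hk.le α a
    have htail_decomp : tailk = ω ^ α k * (a k : Ordinal) +
        CNFsum (n - k - 1) (fun i => α (k + (i + 1))) (fun i => a (k + (i + 1))) := by
      obtain ⟨t, ht⟩ : ∃ t, n - k = t + 1 := ⟨n - k - 1, by omega⟩
      rw [htkdef, ht, CNFsum_front]
      simp [show t = n - k - 1 by omega]
    refine ⟨?_, ?_, ?_⟩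
    · -- case (2)
      intro hne
      have hke : e < α k := lt_of_le_of_ne hkβ (Ne.symm hne)
      have hge : ∀ i, i < k + 1 → e < α i := by
        intro i hi
        rcases Nat.lt_succ_iff_lt_or_eq.mp hi with h | rfl
        · exact hke.trans (hα i k h hk)
        · exact hke
      have hmul : y * CNFsum (k + 1) (fun i => α i - e) a = CNFsum (k + 1) α a :=
        mul_CNFsum B hy_ge hy_le (k + 1) α a hge
      have hx2 : x = CNFsum (k + 1) α a +
          CNFsum (n - (k + 1)) (fun i => α (k + 1 + i)) (fun i => a (k + 1 + i)) :=
        CNFsum_split (k + 1) n (by omega) α a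
      apply div_eq_of _ _ _ hy0
      · rw [hmul, hx2]; exact le_self_add
      · rw [mul_add, mul_one, hmul, hx2]
        refine add_lt_add_right (lt_of_lt_of_le ?_ hy_ge) _
        exact CNFsum_lt _ _ _ e (fun i hi => hk2 (k + 1 + i) (by omega) (by omega))
    · -- case (3)
      intro hke H
      rw [hke] at htail_decomp H
      have hQL : y * CNFsum k (fun i => α i - e) a = CNFsum k α a :=
        mul_CNFsum B hy_ge hy_le k α a (fun i hi => hke ▸ hα i k hi hk)
      have htail' : CNFsum (n - k - 1) (fun i => α (k + (i + 1))) (fun i => a (k + (i + 1)))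
          < ω ^ e :=
        CNFsum_lt _ _ _ e (fun i hi => hk2 (k + (i + 1)) (by omega) (by omega))
      have htailk_lt : ∀ c : ℕ, a k < c → tailk < ω ^ e * (c : Ordinal) := by
        intro c hc
        calc tailk < ω ^ e * (a k : Ordinal) + ω ^ e := by
              rw [htail_decomp]; exact add_lt_add_right htail' _
          _ = ω ^ e * ((a k : Ordinal) + 1) := by rw [mul_add, mul_one]
          _ ≤ ω ^ e * (c : Ordinal) := mul_le_mul_right (by exact_mod_cast hc) _
      rcases Nat.eq_zero_or_pos (a k / B) with hq0 | hq1
      · -- q = 0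
        have hak : a k < B := by
          have h1 := Nat.div_add_mod (a k) B
          have h2 := Nat.mod_lt (a k) hB0
          rw [hq0, Nat.mul_zero] at h1
          omega
        rw [hq0]
        simp only [Nat.cast_zero, add_zero]
        apply div_eq_of _ _ _ hy0
        · rw [hQL, hx_split]; exact le_self_add
        · rw [mul_add, mul_one, hQL, hx_split]
          refine add_lt_add_right ?_ _
          calc tailk < ω ^ e * (B : Ordinal) := htailk_lt B hak
            _ ≤ y := hy_eq ▸ le_self_add
      · -- q ≥ 1
        have hyq : ∀ t : ℕ, 1 ≤ t → y * (t : Ordinal) = ω ^ e * ((B * t : ℕ) : Ordinal) + rst :=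
          fun t ht => by rw [hy_eq]; exact mul_nat_eq e rst B hrst hB0 t ht
        apply div_eq_of _ _ _ hy0
        · rw [mul_add, hQL, hyq (a k / B) hq1, hx_split]
          exact add_le_add_right H _
        · rw [add_assoc, mul_add, hQL,
            show ((a k / B : ℕ) : Ordinal) + 1 = ((a k / B + 1 : ℕ) : Ordinal) by push_cast; ring,
            hyq (a k / B + 1) (by omega), hx_split]
          refine add_lt_add_right
            (lt_of_lt_of_le (htailk_lt (B * (a k / B + 1)) ?_) (le_self_add)) _
          have h1 := Nat.div_add_mod (a k) B
          have h2 := Nat.mod_lt (a k) hB0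
          rw [Nat.mul_add, Nat.mul_one]
          omega
    · -- case (4)
      intro hke Hn
      rw [hke] at htail_decomp Hn
      have hQL : y * CNFsum k (fun i => α i - e) a = CNFsum k α a :=
        mul_CNFsum B hy_ge hy_le k α a (fun i hi => hke ▸ hα i k hi hk)
      have htailk_ge : ∀ c : ℕ, c < a k → ω ^ e * (c : Ordinal) + rst ≤ tailk := by
        intro c hc
        rw [htail_decomp]
        refine le_of_lt (lt_of_lt_of_le ?_ (le_self_add))
        calc ω ^ e * (c : Ordinal) + rst < ω ^ e * (c : Ordinal) + ω ^ e :=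
              add_lt_add_right hrst _
          _ = ω ^ e * ((c : Ordinal) + 1) := by rw [mul_add, mul_one]
          _ ≤ ω ^ e * (a k : Ordinal) := mul_le_mul_right (by exact_mod_cast hc) _
      have hq1 : 1 ≤ a k / B := by
        by_contra h
        have hq0 : a k / B = 0 := Nat.lt_one_iff.mp (Nat.lt_of_not_le h)
        apply Hn
        rw [hq0]
        simp only [Nat.mul_zero, Nat.cast_zero, mul_zero, zero_add]
        refine le_of_lt (lt_of_lt_of_le hrst ?_)
        calc ω ^ e = ω ^ e * 1 := (mul_one _).symm
          _ ≤ ω ^ e * (a k : Ordinal) :=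
              mul_le_mul_right (by exact_mod_cast ha k hk) _
          _ ≤ tailk := htail_decomp ▸ le_self_add
      have hyq : ∀ t : ℕ, 1 ≤ t → y * (t : Ordinal) = ω ^ e * ((B * t : ℕ) : Ordinal) + rst :=
        fun t ht => by rw [hy_eq]; exact mul_nat_eq e rst B hrst hB0 t ht
      apply div_eq_of _ _ _ hy0
      · rw [mul_add, hQL, hx_split]
        rcases Nat.eq_zero_or_pos (a k / B - 1) with h0 | h1
        · rw [h0]; simp only [Nat.cast_zero, mul_zero]
          exact add_le_add_right (zero_le (a := _)) _
        · rw [hyq (a k / B - 1) h1]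
          refine add_le_add_right (htailk_ge (B * (a k / B - 1)) ?_) _
          have h2 : B * (a k / B) ≤ a k := Nat.mul_div_le (a k) B
          have h3 : B * (a k / B - 1) + B = B * (a k / B) := by
            rw [← Nat.mul_succ]
            congr 1
            omega
          omega
      · rw [add_assoc, mul_add, hQL,
          show ((a k / B - 1 : ℕ) : Ordinal) + 1 = ((a k / B : ℕ) : Ordinal) by
            rw [← Nat.cast_succ]; congr 1; omega,
          hyq (a k / B) hq1, hx_split]
        exact add_lt_add_right (lt_of_not_ge Hn) _
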